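/- Let A_1,...,A_k be m-by-n real matrices, b_1,...,b_k vectors in R^m, and lambda >= 0. Define h(r) := (1/2)||r||_2^2 if ||r||_2 <= lambda and h(r) := lambda^2/2 if ||r||_2 > lambda. Suppose x* in R^n minimizes the function x |-> sum_{i=1}^k h(b_i - A_i x), let S* := { i : ||b_i - A_i x*||_2 <= lambda }, and let s* := |S*|. Then x* solves the combinatorial problem (RSN1) with parameter s*: for every x in R^n and every subset S of {1,...,k} with |S| = s*, one has sum_{i in S*} ||b_i - A_i x*||_2^2 <= sum_{i in S} ||b_i - A_i x||_2^2. -/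

import Mathlib

/-- Euclidean norm of a vector in `ℝ^m`. -/
noncomputable def euclNorm {m : ℕ} (v : Fin m → ℝ) : ℝ :=
  Real.sqrt (∑ j, v j ^ 2)

/-- The truncated least-squares functional
`h(r) = (1/2)‖r‖₂²` if `‖r‖₂ ≤ λ` and `h(r) = λ²/2` otherwise. -/
noncomputable def hTrunc {m : ℕ} (lam : ℝ) (r : Fin m → ℝ) : ℝ :=
  if euclNorm r ≤ lam then (1 / 2) * euclNorm r ^ 2 else lam ^ 2 / 2

lemma euclNorm_nonneg {m : ℕ} (v : Fin m → ℝ) : 0 ≤ euclNorm v :=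
  Real.sqrt_nonneg _

lemma hTrunc_le_half_sq {m : ℕ} {lam : ℝ} (hlam : 0 ≤ lam) (r : Fin m → ℝ) :
    hTrunc lam r ≤ (1 / 2) * euclNorm r ^ 2 := by
  unfold hTrunc
  split_ifs with h
  · exact le_rfl
  · push_neg at h
    have : lam ^ 2 ≤ euclNorm r ^ 2 := pow_le_pow_left₀ hlam h.le 2
    linarith

lemma hTrunc_le_half_lam_sq {m : ℕ} {lam : ℝ} (r : Fin m → ℝ) :
    hTrunc lam r ≤ lam ^ 2 / 2 := by
  unfold hTrunc
  split_ifs with h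
  · have h0 := euclNorm_nonneg r
    have : euclNorm r ^ 2 ≤ lam ^ 2 := pow_le_pow_left₀ h0 h 2
    linarith
  · exact le_rfl

theorem truncated_ls_solves_RSN1 {k m n : ℕ}
    (A : Fin k → Matrix (Fin m) (Fin n) ℝ) (b : Fin k → Fin m → ℝ)
    (lam : ℝ) (hlam : 0 ≤ lam) (xstar : Fin n → ℝ)
    (hmin : ∀ x : Fin n → ℝ,
      ∑ i, hTrunc lam (b i - (A i).mulVec xstar)
        ≤ ∑ i, hTrunc lam (b i - (A i).mulVec x)) :
    ∀ (x : Fin n → ℝ) (S : Finset (Fin k)),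
      S.card =
        (Finset.univ.filter
          fun i => euclNorm (b i - (A i).mulVec xstar) ≤ lam).card →
      ∑ i ∈ Finset.univ.filter
          (fun i => euclNorm (b i - (A i).mulVec xstar) ≤ lam),
          euclNorm (b i - (A i).mulVec xstar) ^ 2
        ≤ ∑ i ∈ S, euclNorm (b i - (A i).mulVec x) ^ 2 := by
  intro x S hcard
  set Sstar := Finset.univ.filter
      (fun i => euclNorm (b i - (A i).mulVec xstar) ≤ lam) with hSstar
  -- LHS of hmin split
  have hsplit1 : ∑ i, hTrunc lam (b i - (A i).mulVec xstar)
      = ∑ i ∈ Sstar, (1 / 2) * euclNorm (b i - (A i).mulVec xstar) ^ 2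
        + (Sstarᶜ.card : ℝ) * (lam ^ 2 / 2) := by
    rw [← Finset.sum_add_sum_compl Sstar]
    congr 1
    · apply Finset.sum_congr rfl
      intro i hi
      have : euclNorm (b i - (A i).mulVec xstar) ≤ lam := by
        simpa [hSstar] using (Finset.mem_filter.mp hi).2
      simp [hTrunc, this]
    · rw [Finset.sum_congr rfl (fun i hi => ?_), Finset.sum_const, nsmul_eq_mul]
      have : ¬ euclNorm (b i - (A i).mulVec xstar) ≤ lam := by
        have := Finset.mem_compl.mp hi
        simpa [hSstar] using this
      simp [hTrunc, this]
  -- RHS of hmin bound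
  have hsplit2 : ∑ i, hTrunc lam (b i - (A i).mulVec x)
      ≤ ∑ i ∈ S, (1 / 2) * euclNorm (b i - (A i).mulVec x) ^ 2
        + (Sᶜ.card : ℝ) * (lam ^ 2 / 2) := by
    rw [← Finset.sum_add_sum_compl S]
    gcongr with i hi i hi
    · exact hTrunc_le_half_sq hlam _
    · calc ∑ i ∈ Sᶜ, hTrunc lam (b i - (A i).mulVec x)
          ≤ ∑ i ∈ Sᶜ, lam ^ 2 / 2 :=
            Finset.sum_le_sum (fun i _ => hTrunc_le_half_lam_sq _)
        _ = (Sᶜ.card : ℝ) * (lam ^ 2 / 2) := by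
            rw [Finset.sum_const, nsmul_eq_mul]
  have hcc : Sᶜ.card = Sstarᶜ.card := by
    simp [Finset.card_compl, hcard]
  have key := (hsplit1 ▸ hmin x).trans hsplit2
  rw [hcc] at key
  have : ∑ i ∈ Sstar, (1 / 2) * euclNorm (b i - (A i).mulVec xstar) ^ 2
      ≤ ∑ i ∈ S, (1 / 2) * euclNorm (b i - (A i).mulVec x) ^ 2 := by linarith
  rw [← Finset.mul_sum, ← Finset.mul_sum] at this
  linarith
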